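/- With the hypotheses of the infinitesimal moment-cumulant setting (G(K(z)) = z for formal series G, K as above), the functional relation g(z) = −r(G(z))·G'(z) holds if and only if r(z) = −g(K(z))·K'(z) holds. -/

import Mathlib

open PowerSeries
open Finset

/-- Composition (substitution) of formal power series, correct when the substituted
series has zero constant term (the only case used below). -/
noncomputable def psComp (f a : PowerSeries ℝ) : PowerSeries ℝ :=
  PowerSeries.mk fun n => ∑ k ∈ Finset.range (n + 1), (coeff k f) * (coeff n (a ^ k))

namespace PS

variable {a b f g : PowerSeries ℝ}

lemma coeff_pow_eq_zero (ha : constantCoeff a = 0) {n k : ℕ} (h : n < k) :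
    coeff n (a ^ k) = 0 := by
  have : (X : PowerSeries ℝ) ^ k ∣ a ^ k := pow_dvd_pow_of_dvd (X_dvd_iff.mpr ha) k
  exact X_pow_dvd_iff.mp this n h

lemma coeff_psComp (n : ℕ) :
    coeff n (psComp f a) = ∑ k ∈ range (n + 1), (coeff k f) * (coeff n (a ^ k)) :=
  coeff_mk _ _

lemma coeff_psComp' (ha : constantCoeff a = 0) {n N : ℕ} (hN : n < N) :
    coeff n (psComp f a) = ∑ k ∈ range N, (coeff k f) * (coeff n (a ^ k)) := by
  rw [coeff_psComp]
  apply Finset.sum_subset (Finset.range_subset_range.mpr hN)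
  intro k _ hk
  rw [coeff_pow_eq_zero ha (by simpa using hk), mul_zero]

lemma coeff_aeval (ha : constantCoeff a = 0) (P : Polynomial ℝ) (n : ℕ) :
    coeff n (Polynomial.aeval a P) = ∑ k ∈ range (n + 1), P.coeff k * coeff n (a ^ k) := by
  have hd : P.natDegree < P.natDegree + 1 := Nat.lt_succ_self _
  rw [Polynomial.aeval_eq_sum_range' hd, map_sum]
  have h1 : ∀ k, coeff n (P.coeff k • a ^ k) = P.coeff k * coeff n (a ^ k) := by
    intro k; rw [LinearMap.map_smul, smul_eq_mul]
  simp_rw [h1]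
  set N := max (P.natDegree + 1) (n + 1) with hN
  rw [show ∑ k ∈ range (P.natDegree + 1), P.coeff k * coeff n (a ^ k)
      = ∑ k ∈ range N, P.coeff k * coeff n (a ^ k) from
    Finset.sum_subset (Finset.range_subset_range.mpr (le_max_left _ _)) (fun k _ hk => by
      rw [Polynomial.coeff_eq_zero_of_natDegree_lt (by simpa using hk), zero_mul])]
  exact (Finset.sum_subset (Finset.range_subset_range.mpr (le_max_right _ _)) (fun k _ hk => by
      rw [coeff_pow_eq_zero ha (by simpa using hk), mul_zero])).symm

end PS
namespace PS

variable {a b f g : PowerSeries ℝ}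

lemma psComp_one : psComp 1 a = 1 := by
  ext n
  rw [coeff_psComp]
  rw [Finset.sum_eq_single 0]
  · simp
  · intro k _ hk
    rw [show (coeff k) (1 : PowerSeries ℝ) = 0 by
      simpa [PowerSeries.coeff_one] using hk, zero_mul]
  · simp

lemma psComp_add : psComp (f + g) a = psComp f a + psComp g a := by
  ext n
  simp [coeff_psComp, add_mul, Finset.sum_add_distrib]

lemma psComp_X (ha : constantCoeff a = 0) : psComp X a = a := by
  ext n
  rw [coeff_psComp]
  match n with
  | 0 =>
    rw [Finset.sum_range_one]
    norm_num [PowerSeries.coeff_X, coeff_zero_eq_constantCoeff_apply]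
    exact ha.symm
  | n + 1 =>
    rw [Finset.sum_eq_single 1]
    · simp
    · intro k _ hk1
      rw [PowerSeries.coeff_X, if_neg hk1, zero_mul]
    · intro h
      exact absurd (Finset.mem_range.mpr (by omega)) h

lemma coeff_psComp_trunc (ha : constantCoeff a = 0) {i N : ℕ} (hiN : i < N) :
    coeff i (psComp f a) = coeff i (Polynomial.aeval a (trunc N f)) := by
  rw [coeff_psComp, coeff_aeval ha]
  apply Finset.sum_congr rfl
  intro k hk
  rw [coeff_trunc, if_pos (by have := Finset.mem_range.mp hk; omega)]

lemma coeff_mul_congr {F F' G G' : PowerSeries ℝ} {n : ℕ}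
    (hF : ∀ i ≤ n, coeff i F = coeff i F') (hG : ∀ i ≤ n, coeff i G = coeff i G') :
    coeff n (F * G) = coeff n (F' * G') := by
  rw [PowerSeries.coeff_mul, PowerSeries.coeff_mul]
  apply Finset.sum_congr rfl
  intro p hp
  have := Finset.HasAntidiagonal.mem_antidiagonal.mp hp
  rw [hF p.1 (by omega), hG p.2 (by omega)]

lemma psComp_mul (ha : constantCoeff a = 0) :
    psComp (f * g) a = psComp f a * psComp g a := by
  ext n
  have h1 : coeff n (psComp f a * psComp g a)
      = coeff n (Polynomial.aeval a (trunc (n+1) f) * Polynomial.aeval a (trunc (n+1) g)) :=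
    coeff_mul_congr (fun i hi => coeff_psComp_trunc ha (by omega))
      (fun i hi => coeff_psComp_trunc ha (by omega))
  rw [h1, ← map_mul, coeff_aeval ha, coeff_psComp]
  apply Finset.sum_congr rfl
  intro k hk
  have hkn : k ≤ n := by simpa [Nat.lt_succ_iff] using Finset.mem_range.mp hk
  congr 1
  rw [PowerSeries.coeff_mul, Polynomial.coeff_mul]
  apply Finset.sum_congr rfl
  intro p hp
  have := Finset.HasAntidiagonal.mem_antidiagonal.mp hp
  have h2 := Finset.HasAntidiagonal.mem_antidiagonal.mp hp
  rw [coeff_trunc, coeff_trunc, if_pos (by omega), if_pos (by omega)]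

lemma psComp_pow (ha : constantCoeff a = 0) (k : ℕ) :
    psComp (f ^ k) a = (psComp f a) ^ k := by
  induction k with
  | zero => simpa using psComp_one
  | succ k ih => rw [pow_succ, pow_succ, psComp_mul ha, ih]

lemma constantCoeff_psComp : constantCoeff (psComp f a) = coeff 0 f := by
  rw [← coeff_zero_eq_constantCoeff_apply, coeff_psComp]
  simp

lemma psComp_assoc (ha : constantCoeff a = 0) (hb : constantCoeff b = 0) :
    psComp (psComp f a) b = psComp f (psComp a b) := by
  have hab : constantCoeff (psComp a b) = 0 := by
    rw [constantCoeff_psComp, coeff_zero_eq_constantCoeff_apply]; exact ha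
  ext n
  rw [coeff_psComp, coeff_psComp]
  have h1 : ∀ j ∈ range (n+1), coeff j (psComp f a) * coeff n (b ^ j)
      = ∑ k ∈ range (n+1), coeff k f * (coeff j (a ^ k) * coeff n (b ^ j)) := by
    intro j hj
    rw [coeff_psComp' ha (Nat.lt_succ_of_le (by simpa [Nat.lt_succ_iff] using Finset.mem_range.mp hj)),
      Finset.sum_mul]
    simp [mul_assoc]
  rw [Finset.sum_congr rfl h1, Finset.sum_comm]
  apply Finset.sum_congr rfl
  intro k _
  rw [← Finset.mul_sum]
  congr 1
  rw [← psComp_pow hb, coeff_psComp]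

end PS
namespace PS

variable {a f g : PowerSeries ℝ}

lemma aeval_derivative (P : Polynomial ℝ) :
    d⁄dX ℝ (Polynomial.aeval a P)
      = Polynomial.aeval a (Polynomial.derivative P) * d⁄dX ℝ a := by
  induction P using Polynomial.induction_on' with
  | add p q hp hq => rw [map_add, map_add, map_add, hp, hq, ← add_mul, map_add]
  | monomial k c =>
    rw [Polynomial.aeval_monomial, Polynomial.derivative_monomial, Polynomial.aeval_monomial]
    rw [Derivation.leibniz, Derivation.leibniz_pow]
    have : d⁄dX ℝ ((algebraMap ℝ (PowerSeries ℝ)) c) = 0 := derivative_C (r := c)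
    rw [this]
    match k with
    | 0 => simp
    | k + 1 =>
      simp only [smul_eq_mul, Nat.add_sub_cancel, map_mul, map_natCast]
      push_cast
      ring
end PS
namespace PS

variable {a f g M : PowerSeries ℝ}

lemma psComp_derivative (ha : constantCoeff a = 0) :
    d⁄dX ℝ (psComp f a) = psComp (d⁄dX ℝ f) a * d⁄dX ℝ a := by
  ext n
  rw [coeff_derivative, coeff_psComp_trunc ha (show n + 1 < n + 2 by omega)]
  rw [← coeff_derivative, aeval_derivative]
  apply coeff_mul_congr _ (fun i _ => rfl) |>.symm
  intro i hi
  rw [coeff_psComp, coeff_aeval ha]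
  apply Finset.sum_congr rfl
  intro k hk
  have hki : k ≤ i := by have := Finset.mem_range.mp hk; omega
  congr 1
  rw [Polynomial.coeff_derivative, coeff_trunc, if_pos (by omega), coeff_derivative]

lemma coeff_XM_pow (hM : constantCoeff M = 1) (n : ℕ) :
    coeff n ((X * M) ^ n) = 1 := by
  have h1 := PowerSeries.coeff_X_pow_mul (M ^ n) n 0
  rw [zero_add] at h1
  rw [mul_pow, h1, coeff_zero_eq_constantCoeff_apply, map_pow, hM, one_pow]

lemma psComp_injective (hM : constantCoeff M = 1)
    (h : psComp f (X * M) = psComp g (X * M)) : f = g := by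
  have h0 : constantCoeff (X * M) = 0 := by simp
  ext n
  induction n using Nat.strong_induction_on with
  | _ n ih =>
    have hn := congrArg (coeff n) h
    rw [coeff_psComp, coeff_psComp, Finset.sum_range_succ, Finset.sum_range_succ] at hn
    rw [Finset.sum_congr rfl (fun k hk => by
      rw [ih k (Finset.mem_range.mp hk)])] at hn
    have h2 := add_left_cancel hn
    rwa [coeff_XM_pow hM, mul_one, mul_one] at h2

end PS

/-- `M(w) = 1 + ∑_{n≥1} m_n wⁿ`, encoding `G(z) = z⁻¹ + ∑_{n≥1} m_n z^{-n-1}` via `w = 1/z`. -/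
noncomputable def Mser (m : ℕ → ℝ) : PowerSeries ℝ :=
  PowerSeries.mk fun k => if k = 0 then 1 else m k

/-- `R̂(y) = ∑_{n≥1} r_n yⁿ`, encoding `K(z) = z⁻¹ + ∑_{n≥1} r_n z^{n-1} = N(z)/z`
with `N(z) = 1 + ∑_{n≥1} r_n zⁿ`. -/
noncomputable def Rser (r : ℕ → ℝ) : PowerSeries ℝ :=
  PowerSeries.mk fun k => if k = 0 then 0 else r k

/-- `N(z) = 1 + ∑_{n≥1} r_n zⁿ`, so that `K(z) = N(z)/z`. -/
noncomputable def Nser (r : ℕ → ℝ) : PowerSeries ℝ :=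
  PowerSeries.mk fun k => if k = 0 then 1 else r k

/-- `N₂(z) = 1 − ∑_{n≥2} (n-1) r_n zⁿ`, so that `K'(z) = −z⁻²·N₂(z)`. -/
noncomputable def N2ser (r : ℕ → ℝ) : PowerSeries ℝ :=
  PowerSeries.mk fun k => if k = 0 then 1 else -((k : ℝ) - 1) * r k

/-- `ĝ(y) = ∑_{n≥1} m'_n y^{n+1}`, so that `g(z) = ∑_{n≥1} m'_n z^{-n-1} = ĝ(1/z)`. -/
noncomputable def Ghat (m' : ℕ → ℝ) : PowerSeries ℝ :=
  PowerSeries.mk fun k => if k ≤ 1 then 0 else m' (k - 1)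

/-- `∑_k (k+1) m_k w^k`, encoding `-G'(z)`. -/
noncomputable def Dser (m : ℕ → ℝ) : PowerSeries ℝ :=
  PowerSeries.mk fun k => ((k : ℝ) + 1) * (if k = 0 then 1 else m k)

/-- `∑_k m'_{k+1} w^k`, encoding `g(z) = ∑_{n≥1} m'_n z^{-n-1}`. -/
noncomputable def M'ser (m' : ℕ → ℝ) : PowerSeries ℝ :=
  PowerSeries.mk fun k => m' (k + 1)

/-- `∑_k r'_{k+1} y^k`, encoding `r(z) = ∑_{n≥1} r'_n z^{n-1}`. -/
noncomputable def R'ser (r' : ℕ → ℝ) : PowerSeries ℝ :=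
  PowerSeries.mk fun k => r' (k + 1)

namespace PS

variable {a f g : PowerSeries ℝ} {m r m' r' : ℕ → ℝ}

lemma psComp_sub : psComp (f - g) a = psComp f a - psComp g a := by
  ext n
  simp [coeff_psComp, sub_mul, Finset.sum_sub_distrib]

lemma psComp_X_right : psComp f X = f := by
  ext n
  rw [coeff_psComp, Finset.sum_eq_single n]
  · rw [← pow_one (X : PowerSeries ℝ), ← pow_mul, coeff_X_pow, if_pos (by omega), mul_one]
  · intro k hk hkn
    rw [← pow_one (X : PowerSeries ℝ), ← pow_mul, coeff_X_pow, if_neg (by omega), mul_zero]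
  · intro h
    exact absurd (Finset.mem_range.mpr (by omega)) h

lemma constM : constantCoeff (Mser m) = 1 := by
  rw [← coeff_zero_eq_constantCoeff_apply, Mser, coeff_mk, if_pos rfl]

lemma constN : constantCoeff (Nser r) = 1 := by
  rw [← coeff_zero_eq_constantCoeff_apply, Nser, coeff_mk, if_pos rfl]

lemma coeff_zero_N2 : coeff 0 (N2ser r) = 1 := by
  rw [N2ser, coeff_mk, if_pos rfl]

lemma hNR : Nser r = 1 + Rser r := by
  ext n
  rw [Nser, map_add, coeff_mk, Rser, coeff_mk, PowerSeries.coeff_one]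
  by_cases h : n = 0 <;> simp [h]

lemma hGhat : Ghat m' = X ^ 2 * M'ser m' := by
  rw [mul_comm]
  ext n
  rw [PowerSeries.coeff_mul_X_pow', Ghat, coeff_mk, M'ser]
  by_cases h : n ≤ 1
  · rw [if_pos h, if_neg (by omega)]
  · rw [if_neg h, if_pos (by omega), coeff_mk]
    congr 1
    omega

lemma hN2 : N2ser r = Nser r - X * d⁄dX ℝ (Nser r) := by
  ext n
  match n with
  | 0 => simp [N2ser, Nser]
  | n + 1 =>
    simp [N2ser, Nser, coeff_succ_X_mul, coeff_derivative]
    ring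

lemma hDsum : Dser m = X * d⁄dX ℝ (Mser m) + Mser m := by
  ext n
  match n with
  | 0 => simp [Dser, Mser]
  | n + 1 =>
    simp [Dser, Mser, coeff_succ_X_mul, coeff_derivative]
    ring

lemma hD : d⁄dX ℝ (X * Mser m) = Dser m := by
  rw [Derivation.leibniz, derivative_X, smul_eq_mul, smul_eq_mul, mul_one, hDsum, add_comm]

end PS

open PS

/-- Proposition 2.2, (1') ⟺ (2'): if `G(K(z)) = z` (encoded as `M = 1 + R̂(w·M)`),
then the functional relation `g(z) = −r(G(z))·G'(z)` (encoded as
`∑ m'_{k+1} w^k = r(wM) · ∑ (k+1) m_k w^k` with `w = 1/z`) holds if and only if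
the functional relation `r(z) = −g(K(z))·K'(z)` holds; the latter, using
`K = N/z`, `K' = −z⁻²N₂` and `1/K = z·N⁻¹`, is encoded as
`z²·r(z) = ĝ(z·N⁻¹)·N₂`. -/
theorem infinitesimal_relations_equivalent (m r m' r' : ℕ → ℝ)
    (hGK : Mser m = 1 + psComp (Rser r) (PowerSeries.X * Mser m)) :
    (M'ser m' = psComp (R'ser r') (PowerSeries.X * Mser m) * Dser m) ↔
      (PowerSeries.X ^ 2 * R'ser r'
        = psComp (Ghat m') (PowerSeries.X * (Nser r)⁻¹) * N2ser r) := by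
  set φ : PowerSeries ℝ := PowerSeries.X * Mser m with hφdef
  set ψ : PowerSeries ℝ := PowerSeries.X * (Nser r)⁻¹ with hψdef
  have hφ0 : constantCoeff φ = 0 := by simp [hφdef]
  have hψ0 : constantCoeff ψ = 0 := by simp [hψdef]
  -- G(K(z)) = z, encoded
  have hNφ : psComp (Nser r) φ = Mser m := by
    rw [hNR, psComp_add, psComp_one]; exact hGK.symm
  -- ψ ∘ φ = X
  have hNinv : psComp (Nser r) φ * psComp (Nser r)⁻¹ φ = 1 := by
    rw [← psComp_mul hφ0, PowerSeries.mul_inv_cancel _ (by rw [constN]; norm_num), psComp_one]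
  have hψφ : psComp ψ φ = PowerSeries.X := by
    rw [hψdef, psComp_mul hφ0, psComp_X hφ0]
    calc φ * psComp (Nser r)⁻¹ φ
        = PowerSeries.X * (psComp (Nser r) φ * psComp (Nser r)⁻¹ φ) := by
          rw [hNφ, hφdef]; ring
      _ = PowerSeries.X := by rw [hNinv, mul_one]
  -- chain rule consequence of hNφ
  have hchain : psComp (d⁄dX ℝ (Nser r)) φ * Dser m = d⁄dX ℝ (Mser m) := by
    have h := congrArg (d⁄dX ℝ) hNφ
    rwa [psComp_derivative hφ0, hφdef, hD] at h
  -- key identity: (N₂ ∘ φ) · D = M²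
  have hkey : psComp (N2ser r) φ * Dser m = Mser m ^ 2 := by
    rw [hN2, psComp_sub, hNφ, psComp_mul hφ0, psComp_X hφ0]
    calc (Mser m - φ * psComp (d⁄dX ℝ (Nser r)) φ) * Dser m
        = Mser m * Dser m - φ * (psComp (d⁄dX ℝ (Nser r)) φ * Dser m) := by ring
      _ = Mser m * Dser m - (PowerSeries.X * Mser m) * d⁄dX ℝ (Mser m) := by
          rw [hchain, hφdef]
      _ = Mser m ^ 2 := by rw [hDsum]; ring
  have hN2φ0 : psComp (N2ser r) φ ≠ 0 := fun h => by
    have := congrArg (coeff 0) h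
    rw [coeff_psComp] at this
    simp [coeff_zero_N2 (r := r)] at this
  constructor
  · intro h1
    apply psComp_injective (M := Mser m) constM
    rw [psComp_mul hφ0, psComp_mul hφ0, psComp_pow hφ0, psComp_X hφ0,
      psComp_assoc hψ0 hφ0, hψφ, psComp_X_right, hGhat, h1, hφdef]
    linear_combination (-(PowerSeries.X : PowerSeries ℝ) ^ 2 * psComp (R'ser r') (PowerSeries.X * Mser m)) * hkey
  · intro h2
    have h3 := congrArg (fun F => psComp F φ) h2
    rw [psComp_mul hφ0, psComp_mul hφ0, psComp_pow hφ0, psComp_X hφ0,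
      psComp_assoc hψ0 hφ0, hψφ, psComp_X_right, hGhat] at h3
    -- h3 : φ^2 * psComp R' φ = X^2 * M' * psComp N₂ φ
    have hX2 : (PowerSeries.X : PowerSeries ℝ) ^ 2 ≠ 0 := pow_ne_zero _ PowerSeries.X_ne_zero
    have h4 : Mser m ^ 2 * psComp (R'ser r') φ = M'ser m' * psComp (N2ser r) φ := by
      apply mul_left_cancel₀ hX2
      calc PowerSeries.X ^ 2 * (Mser m ^ 2 * psComp (R'ser r') φ)
          = φ ^ 2 * psComp (R'ser r') φ := by rw [hφdef]; ring
        _ = PowerSeries.X ^ 2 * M'ser m' * psComp (N2ser r) φ := h3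
        _ = PowerSeries.X ^ 2 * (M'ser m' * psComp (N2ser r) φ) := by ring
    apply mul_left_cancel₀ hN2φ0
    calc psComp (N2ser r) φ * M'ser m'
        = Mser m ^ 2 * psComp (R'ser r') φ := by rw [h4]; ring
      _ = psComp (N2ser r) φ * (psComp (R'ser r') φ * Dser m) := by rw [← hkey]; ring
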